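/- (Per-iteration descent with normalized preconditioned step.) Let f : R^d → R be L-smooth, let x ∈ R^d, let m ∈ R^d with D m ≠ 0 where D is symmetric positive definite with condition number at most κ, let ε = m − ∇f(x), and set x⁺ = x − η·D m/‖D m‖ for η > 0. Then f(x⁺) ≤ f(x) − η·‖∇f(x)‖/√κ + 2η·‖ε‖ + η²L/2. -/

import Mathlib

set_option maxHeartbeats 1000000

open Matrix

local notation "⟪" x ", " y "⟫" => @inner ℝ _ _ x y

private lemma quad_nonneg' {d : ℕ} {A : Matrix (Fin d) (Fin d) ℝ} (hA : A.PosSemidef)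
    (v : EuclideanSpace ℝ (Fin d)) : 0 ≤ ⟪v, Matrix.toEuclideanLin A v⟫ := by
  have h := hA.dotProduct_mulVec_nonneg ((WithLp.equiv 2 _) v)
  rw [Matrix.toEuclideanLin_apply]
  simpa [PiLp.inner_apply, RCLike.inner_apply, dotProduct, mul_comm] using h

private lemma descent_lemma' {d : ℕ} (f : EuclideanSpace ℝ (Fin d) → ℝ) (L : ℝ)
    (hdiff : Differentiable ℝ f)
    (hsmooth : ∀ x y, ‖gradient f x - gradient f y‖ ≤ L * ‖x - y‖)
    (x v : EuclideanSpace ℝ (Fin d)) :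
    f (x + v) ≤ f x + ⟪gradient f x, v⟫ + L / 2 * ‖v‖ ^ 2 := by
  have key : ∀ t : ℝ, HasDerivAt (fun t : ℝ => f (x + t • v)) ⟪gradient f (x + t • v), v⟫ t := by
    intro t
    have hγ : HasDerivAt (fun t : ℝ => x + t • v) v t := by
      simpa using ((hasDerivAt_id t).smul_const v).const_add x
    have hf := hasGradientAt_iff_hasFDerivAt.mp (hdiff (x + t • v)).hasGradientAt
    have hc := hf.comp_hasDerivAt t hγ
    simp only [InnerProductSpace.toDual_apply_apply] at hc ⊢
    exact hc
  have hB : ∀ t : ℝ, HasDerivAt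
      (fun t : ℝ => f x + t * ⟪gradient f x, v⟫ + L / 2 * (t ^ 2 * ‖v‖ ^ 2))
      (⟪gradient f x, v⟫ + L * t * ‖v‖ ^ 2) t := by
    intro t
    have h1 : HasDerivAt (fun t : ℝ => f x + t * ⟪gradient f x, v⟫) ⟪gradient f x, v⟫ t := by
      simpa using ((hasDerivAt_id t).mul_const ⟪gradient f x, v⟫).const_add (f x)
    have h2 : HasDerivAt (fun t : ℝ => L / 2 * (t ^ 2 * ‖v‖ ^ 2))
        (L / 2 * (2 * t * ‖v‖ ^ 2)) t := by
      exact (((hasDerivAt_pow 2 t).mul_const (‖v‖ ^ 2)).const_mul (L / 2)).congr_deriv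
        (by ring_nf)
    have := h1.add h2
    exact this.congr_deriv (by ring)
  have main := image_le_of_deriv_right_le_deriv_boundary
    (f := fun t : ℝ => f (x + t • v)) (f' := fun t => ⟪gradient f (x + t • v), v⟫)
    (a := 0) (b := 1)
    (Continuous.continuousOn (by have := hdiff.continuous; fun_prop))
    (fun t _ => (key t).hasDerivWithinAt)
    (B := fun t => f x + t * ⟪gradient f x, v⟫ + L / 2 * (t ^ 2 * ‖v‖ ^ 2))
    (B' := fun t => ⟪gradient f x, v⟫ + L * t * ‖v‖ ^ 2)
    (by simp)
    (Continuous.continuousOn (by fun_prop))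
    (fun t _ => (hB t).hasDerivWithinAt)
    (fun t ht => by
      have h1 : ⟪gradient f (x + t • v) - gradient f x, v⟫ ≤
          ‖gradient f (x + t • v) - gradient f x‖ * ‖v‖ := real_inner_le_norm _ _
      have h2 : ‖gradient f (x + t • v) - gradient f x‖ ≤ L * (t * ‖v‖) := by
        have := hsmooth (x + t • v) x
        simpa [norm_smul, abs_of_nonneg ht.1] using this
      have h3 : ⟪gradient f (x + t • v), v⟫ - ⟪gradient f x, v⟫ ≤ L * (t * ‖v‖) * ‖v‖ := by
        rw [← inner_sub_left]
        exact h1.trans (by nlinarith [norm_nonneg v])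
      have h4 : L * (t * ‖v‖) * ‖v‖ = L * t * ‖v‖ ^ 2 := by ring
      show ⟪gradient f (x + t • v), v⟫ ≤ ⟪gradient f x, v⟫ + L * t * ‖v‖ ^ 2
      linarith)
  have := main (Set.right_mem_Icc.mpr zero_le_one)
  simpa using this

/-- Per-iteration descent for a normalized stochastically preconditioned step. -/
theorem normalized_preconditioned_descent
    (d : ℕ) (f : EuclideanSpace ℝ (Fin d) → ℝ) (L : ℝ) (hL : 0 < L)
    (hdiff : Differentiable ℝ f)
    (hsmooth : ∀ x y, ‖gradient f x - gradient f y‖ ≤ L * ‖x - y‖)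
    (D : Matrix (Fin d) (Fin d) ℝ) (hD : D.PosDef)
    (mD MD κ : ℝ) (hmD : 0 < mD) (hmM : mD ≤ MD) (hκ : MD ≤ κ * mD)
    (hlow : (D - mD • (1 : Matrix (Fin d) (Fin d) ℝ)).PosSemidef)
    (hup : ((MD • (1 : Matrix (Fin d) (Fin d) ℝ)) - D).PosSemidef)
    (x mv : EuclideanSpace ℝ (Fin d))
    (hDm : Matrix.toEuclideanLin D mv ≠ 0)
    (η : ℝ) (hη : 0 < η)
    (ε : EuclideanSpace ℝ (Fin d)) (hε : ε = mv - gradient f x)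
    (x' : EuclideanSpace ℝ (Fin d))
    (hx' : x' = x - (η / ‖Matrix.toEuclideanLin D mv‖) • Matrix.toEuclideanLin D mv) :
    f x' ≤ f x - η * ‖gradient f x‖ / Real.sqrt κ + 2 * η * ‖ε‖ + η ^ 2 * L / 2 := by
  set g := gradient f x with hg
  set T := Matrix.toEuclideanLin D with hT
  set w : EuclideanSpace ℝ (Fin d) := T mv with hw
  set n := ‖w‖ with hn
  have hn0 : 0 < n := norm_pos_iff.mpr hDm
  set q : ℝ := ⟪mv, w⟫ with hq
  -- κ facts
  have hκ1 : 1 ≤ κ := by nlinarith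
  have hsκ : 1 ≤ Real.sqrt κ := by
    rw [show (1:ℝ) = Real.sqrt 1 by simp]
    exact Real.sqrt_le_sqrt hκ1
  have hsκ0 : 0 < Real.sqrt κ := lt_of_lt_of_le one_pos hsκ
  -- F1 : mD * ‖mv‖^2 ≤ q
  have hq1 : mD * ‖mv‖ ^ 2 ≤ q := by
    have h := quad_nonneg' hlow mv
    have h1 : Matrix.toEuclideanLin (mD • (1 : Matrix (Fin d) (Fin d) ℝ)) mv = mD • mv := by
      simp [Matrix.toEuclideanLin_apply]
    have heq : Matrix.toEuclideanLin (D - mD • (1 : Matrix (Fin d) (Fin d) ℝ)) mv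
        = w - mD • mv := by
      rw [map_sub, LinearMap.sub_apply, h1]
    rw [heq, inner_sub_right, real_inner_smul_right, real_inner_self_eq_norm_sq] at h
    linarith
  have hq0 : 0 ≤ q := le_trans (by positivity) hq1
  -- F2 : ‖w‖^2 ≤ MD * q
  have hq2 : n ^ 2 ≤ MD * q := by
    have hP : (MD • D - D * D).PosSemidef := by
      open scoped MatrixOrder in set S := CFC.sqrt D with hS
      open scoped MatrixOrder in have hSS : S * S = D := CFC.sqrt_mul_sqrt_self D hD.posSemidef.nonneg
      have hP0 := hup.mul_mul_conjTranspose_same S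
      open scoped MatrixOrder in have hherm : Sᴴ = S := (CFC.sqrt_nonneg D).posSemidef.1
      rw [hherm] at hP0
      have : S * (MD • 1 - D) * S = MD • D - D * D := by
        rw [← hSS]; noncomm_ring
      rwa [this] at hP0
    have h := quad_nonneg' hP mv
    have hmul : Matrix.toEuclideanLin (D * D) mv = T (T mv) := by
      simp [hT, Matrix.toEuclideanLin_apply, mulVec_mulVec]
    have hsmul : Matrix.toEuclideanLin (MD • D) mv = MD • (T mv) := by
      simp [hT, Matrix.toEuclideanLin_apply, smul_mulVec]
    have heq : Matrix.toEuclideanLin (MD • D - D * D) mv = MD • w - T w := by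
      rw [map_sub, LinearMap.sub_apply, hmul, hsmul]
    have hsym : ⟪mv, T w⟫ = ⟪T mv, w⟫ := by
      have := (Matrix.isHermitian_iff_isSymmetric.mp hD.1) mv w
      exact this.symm
    rw [heq, inner_sub_right, real_inner_smul_right, hsym, ← hw,
      real_inner_self_eq_norm_sq] at h
    linarith
  -- key : n * ‖mv‖ ≤ √κ * q
  have hkey : n * ‖mv‖ ≤ Real.sqrt κ * q := by
    have hsq : (n * ‖mv‖) ^ 2 ≤ κ * q ^ 2 := by
      have hκ0 : (0:ℝ) ≤ κ := by linarith
      calc (n * ‖mv‖) ^ 2 = n ^ 2 * ‖mv‖ ^ 2 := by ring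
        _ ≤ MD * q * ‖mv‖ ^ 2 := mul_le_mul_of_nonneg_right hq2 (sq_nonneg _)
        _ ≤ κ * mD * q * ‖mv‖ ^ 2 :=
            mul_le_mul_of_nonneg_right (mul_le_mul_of_nonneg_right hκ hq0) (sq_nonneg _)
        _ = κ * q * (mD * ‖mv‖ ^ 2) := by ring
        _ ≤ κ * q * q := mul_le_mul_of_nonneg_left hq1 (mul_nonneg hκ0 hq0)
        _ = κ * q ^ 2 := by ring
    have h1 : n * ‖mv‖ ≤ Real.sqrt (κ * q ^ 2) := by
      have h0 : 0 ≤ n * ‖mv‖ := mul_nonneg hn0.le (norm_nonneg _)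
      calc n * ‖mv‖ = Real.sqrt ((n * ‖mv‖) ^ 2) := (Real.sqrt_sq h0).symm
        _ ≤ Real.sqrt (κ * q ^ 2) := Real.sqrt_le_sqrt hsq
    rwa [Real.sqrt_mul (by linarith : (0:ℝ) ≤ κ), Real.sqrt_sq hq0] at h1
  -- lower bound on ⟪g, w⟫
  have hgw : n * ‖g‖ / Real.sqrt κ - 2 * n * ‖ε‖ ≤ ⟪g, w⟫ := by
    have hg_eq : g = mv - ε := by rw [hε]; abel
    have hsplit : ⟪g, w⟫ = q - ⟪ε, w⟫ := by
      rw [hg_eq, inner_sub_left, hq]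
    have hεw : ⟪ε, w⟫ ≤ ‖ε‖ * n := real_inner_le_norm ε w
    have hm_low : ‖g‖ - ‖ε‖ ≤ ‖mv‖ := by
      have : ‖g‖ ≤ ‖mv‖ + ‖ε‖ := by
        calc ‖g‖ = ‖mv - ε‖ := by rw [hg_eq]
          _ ≤ ‖mv‖ + ‖ε‖ := norm_sub_le _ _
      linarith
    have hq_low : n * (‖g‖ - ‖ε‖) / Real.sqrt κ ≤ q := by
      rw [div_le_iff₀ hsκ0]
      have h1 : n * (‖g‖ - ‖ε‖) ≤ n * ‖mv‖ :=
        mul_le_mul_of_nonneg_left hm_low hn0.le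
      calc n * (‖g‖ - ‖ε‖) ≤ Real.sqrt κ * q := le_trans h1 hkey
        _ = q * Real.sqrt κ := by ring
    have hq_low2 : n * ‖g‖ / Real.sqrt κ - n * ‖ε‖ ≤ q := by
      have hd : n * (‖g‖ - ‖ε‖) / Real.sqrt κ
          = n * ‖g‖ / Real.sqrt κ - n * ‖ε‖ / Real.sqrt κ := by ring
      have he : n * ‖ε‖ / Real.sqrt κ ≤ n * ‖ε‖ := by
        rw [div_le_iff₀ hsκ0]
        nlinarith [mul_nonneg hn0.le (norm_nonneg ε)]
      rw [hd] at hq_low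
      linarith
    rw [hsplit]
    linarith
  -- apply descent lemma
  set v : EuclideanSpace ℝ (Fin d) := -((η / n) • w) with hv
  have hx'' : x' = x + v := by rw [hx', hv]; abel
  have hnv : ‖v‖ = η := by
    rw [hv, norm_neg, norm_smul, Real.norm_eq_abs, abs_of_pos (div_pos hη hn0), ← hn,
      div_mul_cancel₀ _ hn0.ne']
  have hdesc := descent_lemma' f L hdiff hsmooth x v
  rw [← hx''] at hdesc
  have hinner : ⟪g, v⟫ ≤ -(η * ‖g‖ / Real.sqrt κ) + 2 * η * ‖ε‖ := by
    rw [hv, inner_neg_right, real_inner_smul_right]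
    have hpos : 0 < η / n := div_pos hη hn0
    have := mul_le_mul_of_nonneg_left hgw hpos.le
    have hid1 : η / n * (n * ‖g‖ / Real.sqrt κ - 2 * n * ‖ε‖)
        = η * ‖g‖ / Real.sqrt κ - 2 * η * ‖ε‖ := by
      field_simp
    rw [hid1] at this
    linarith
  rw [hnv] at hdesc
  calc f x' ≤ f x + ⟪g, v⟫ + L / 2 * η ^ 2 := hdesc
    _ ≤ f x + (-(η * ‖g‖ / Real.sqrt κ) + 2 * η * ‖ε‖) + L / 2 * η ^ 2 := by linarith
    _ = f x - η * ‖g‖ / Real.sqrt κ + 2 * η * ‖ε‖ + η ^ 2 * L / 2 := by ring
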